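/- If 0 < θ ≤ 1, p ≥ 0 and λ ≥ 0, then the GLL density f(x;θ,λ,p) is non-increasing on (0,1), and consequently the cdf F(x;θ,λ,p) is concave on (0,1). -/

import Mathlib

open Real MeasureTheory

/-- The generalized Log-Lindley (GLL) density. -/
noncomputable def gll (θ lam p x : ℝ) : ℝ :=
  θ ^ (2 + p) / (Real.Gamma (1 + p) * (1 + p + lam * θ)) *
    (-Real.log x) ^ p * (lam - Real.log x) * x ^ (θ - 1)

lemma gll_anti (θ lam p : ℝ) (hθ0 : 0 < θ) (hθ1 : θ ≤ 1) (hp : 0 ≤ p)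
    (hlam : 0 ≤ lam) : AntitoneOn (gll θ lam p) (Set.Ioo 0 1) := by
  intro x hx y hy hxy
  obtain ⟨hx0, hx1⟩ := hx
  obtain ⟨hy0, hy1⟩ := hy
  have hlx : Real.log x < 0 := Real.log_neg hx0 hx1
  have hly : Real.log y < 0 := Real.log_neg hy0 hy1
  have hlog : Real.log x ≤ Real.log y := Real.log_le_log hx0 hxy
  have hC : 0 ≤ θ ^ (2 + p) / (Real.Gamma (1 + p) * (1 + p + lam * θ)) := by
    apply div_nonneg (Real.rpow_nonneg hθ0.le _)
    have h1 : 0 < Real.Gamma (1 + p) := Real.Gamma_pos_of_pos (by linarith)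
    have h2 : 0 < 1 + p + lam * θ := by nlinarith
    positivity
  have h1 : (-Real.log y) ^ p ≤ (-Real.log x) ^ p :=
    Real.rpow_le_rpow (by linarith) (by linarith) hp
  have h2 : lam - Real.log y ≤ lam - Real.log x := by linarith
  have h3 : y ^ (θ - 1) ≤ x ^ (θ - 1) :=
    Real.rpow_le_rpow_of_nonpos hx0 hxy (by linarith)
  have hay : (0:ℝ) ≤ (-Real.log y) ^ p := Real.rpow_nonneg (by linarith) _
  have hax : (0:ℝ) ≤ (-Real.log x) ^ p := Real.rpow_nonneg (by linarith) _
  have hby : (0:ℝ) ≤ lam - Real.log y := by linarith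
  have hcy : (0:ℝ) ≤ y ^ (θ - 1) := Real.rpow_nonneg hy0.le _
  unfold gll
  apply mul_le_mul _ h3 hcy
  · exact mul_nonneg (mul_nonneg hC hax) (by linarith)
  · apply mul_le_mul _ h2 hby (mul_nonneg hC hax)
    exact mul_le_mul_of_nonneg_left h1 hC

theorem gll_cdf_concave (θ lam p : ℝ) (hθ0 : 0 < θ) (hθ1 : θ ≤ 1) (hp : 0 ≤ p)
    (hlam : 0 ≤ lam) :
    AntitoneOn (gll θ lam p) (Set.Ioo 0 1) ∧
      ConcaveOn ℝ (Set.Ioo 0 1) (fun x => ∫ t in Set.Ioo (0:ℝ) x, gll θ lam p t) := by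
  set f := gll θ lam p with hf
  have hanti : AntitoneOn f (Set.Ioo 0 1) := gll_anti θ lam p hθ0 hθ1 hp hlam
  refine ⟨hanti, ?_⟩
  -- integrability on subintervals Ioc of (0,1)
  have hIoc : ∀ a b : ℝ, a ∈ Set.Ioo (0:ℝ) 1 → b ∈ Set.Ioo (0:ℝ) 1 → a ≤ b →
      IntegrableOn f (Set.Ioc a b) volume := by
    intro a b ha hb hab
    have hsub : Set.uIcc a b ⊆ Set.Ioo (0:ℝ) 1 := by
      rw [Set.uIcc_of_le hab]
      exact fun t ht => ⟨lt_of_lt_of_le ha.1 ht.1, lt_of_le_of_lt ht.2 hb.2⟩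
    exact ((hanti.mono hsub).intervalIntegrable).1
  by_cases hI : IntegrableOn f (Set.Ioo 0 (1/2)) volume
  · -- integrable case
    have hInt : ∀ x ∈ Set.Ioo (0:ℝ) 1, IntegrableOn f (Set.Ioo 0 x) volume := by
      intro x hx
      rcases le_or_gt x (1/2) with h | h
      · exact hI.mono_set (Set.Ioo_subset_Ioo le_rfl h)
      · have h14 : (1/4:ℝ) ∈ Set.Ioo (0:ℝ) 1 := by norm_num
        have := hI.union (hIoc (1/4) x h14 hx (by linarith))
        apply this.mono_set
        intro t ht
        rcases lt_or_ge t (1/2) with h' | h'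
        · exact Or.inl ⟨ht.1, h'⟩
        · exact Or.inr ⟨by linarith, ht.2.le⟩
    -- difference formula
    have hdiff : ∀ a b : ℝ, a ∈ Set.Ioo (0:ℝ) 1 → b ∈ Set.Ioo (0:ℝ) 1 → a < b →
        (∫ t in Set.Ioo (0:ℝ) b, f t) - (∫ t in Set.Ioo (0:ℝ) a, f t)
          = ∫ t in Set.Ioo a b, f t := by
      intro a b ha hb hab
      have h1 : IntegrableOn f (Set.Ioc 0 a) volume :=
        (integrableOn_Ioc_iff_integrableOn_Ioo (by simp)).2 (hInt a ha)
      have h2 : IntegrableOn f (Set.Ioc a b) volume := hIoc a b ha hb hab.le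
      have hu : Set.Ioc (0:ℝ) a ∪ Set.Ioc a b = Set.Ioc 0 b :=
        Set.Ioc_union_Ioc_eq_Ioc ha.1.le hab.le
      have := setIntegral_union (Set.Ioc_disjoint_Ioc_of_le le_rfl) measurableSet_Ioc h1 h2 (f := f)
        (μ := volume)
      rw [hu] at this
      rw [← integral_Ioc_eq_integral_Ioo, ← integral_Ioc_eq_integral_Ioo,
        ← integral_Ioc_eq_integral_Ioo, this]
      ring
    -- bounds for the integral over Ioo a b
    have hmem : ∀ a b : ℝ, a ∈ Set.Ioo (0:ℝ) 1 → b ∈ Set.Ioo (0:ℝ) 1 →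
        Set.Ioo a b ⊆ Set.Ioo (0:ℝ) 1 :=
      fun a b ha hb t ht => ⟨lt_trans ha.1 ht.1, lt_trans ht.2 hb.2⟩
    have hub : ∀ a b : ℝ, a ∈ Set.Ioo (0:ℝ) 1 → b ∈ Set.Ioo (0:ℝ) 1 → a < b →
        (∫ t in Set.Ioo a b, f t) ≤ (b - a) * f a := by
      intro a b ha hb hab
      have hint : IntegrableOn f (Set.Ioo a b) volume :=
        (hIoc a b ha hb hab.le).mono_set Set.Ioo_subset_Ioc_self
      have hconst : IntegrableOn (fun _ => f a) (Set.Ioo a b) volume :=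
        integrableOn_const (by rw [Real.volume_Ioo]; exact ENNReal.ofReal_ne_top)
      have hle : ∀ t ∈ Set.Ioo a b, f t ≤ f a := fun t ht =>
        hanti ha (hmem a b ha hb ht) ht.1.le
      have := setIntegral_mono_on hint hconst measurableSet_Ioo hle
      rwa [setIntegral_const, Real.volume_real_Ioo_of_le hab.le,
        smul_eq_mul] at this
    have hlb : ∀ a b : ℝ, a ∈ Set.Ioo (0:ℝ) 1 → b ∈ Set.Ioo (0:ℝ) 1 → a < b →
        (b - a) * f b ≤ ∫ t in Set.Ioo a b, f t := by
      intro a b ha hb hab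
      have hint : IntegrableOn f (Set.Ioo a b) volume :=
        (hIoc a b ha hb hab.le).mono_set Set.Ioo_subset_Ioc_self
      have hconst : IntegrableOn (fun _ => f b) (Set.Ioo a b) volume :=
        integrableOn_const (by rw [Real.volume_Ioo]; exact ENNReal.ofReal_ne_top)
      have hle : ∀ t ∈ Set.Ioo a b, f b ≤ f t := fun t ht =>
        hanti (hmem a b ha hb ht) hb ht.2.le
      have := setIntegral_mono_on hconst hint measurableSet_Ioo hle
      rwa [setIntegral_const, Real.volume_real_Ioo_of_le hab.le,
        smul_eq_mul] at this
    apply concaveOn_of_slope_anti_adjacent (convex_Ioo 0 1)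
    intro x y z hx hz hxy hyz
    have hy : y ∈ Set.Ioo (0:ℝ) 1 := ⟨lt_trans hx.1 hxy, lt_trans hyz hz.2⟩
    have hd1 := hdiff x y hx hy hxy
    have hd2 := hdiff y z hy hz hyz
    have hub2 := hub y z hy hz hyz
    have hlb1 := hlb x y hx hy hxy
    rw [div_le_div_iff₀ (by linarith) (by linarith)]
    rw [hd1, hd2]
    nlinarith [hub2, hlb1]
  · -- non-integrable case: the integral is identically 0 on (0,1)
    have hzero : ∀ x ∈ Set.Ioo (0:ℝ) 1, (∫ t in Set.Ioo (0:ℝ) x, f t) = 0 := by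
      intro x hx
      apply integral_undef
      intro h
      have h' : IntegrableOn f (Set.Ioo 0 x) volume := h
      apply hI
      rcases le_or_gt (1/2) x with hle | hlt
      · exact h'.mono_set (Set.Ioo_subset_Ioo le_rfl hle)
      · have hx2 : (x/2:ℝ) ∈ Set.Ioo (0:ℝ) 1 := ⟨by linarith [hx.1], by linarith [hx.2]⟩
        have h12 : (1/2:ℝ) ∈ Set.Ioo (0:ℝ) 1 := by norm_num
        have := h'.union (hIoc (x/2) (1/2) hx2 h12 (by linarith [hx.1]))
        apply this.mono_set
        intro t ht
        rcases lt_or_ge t x with hlt' | hle'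
        · exact Or.inl ⟨ht.1, hlt'⟩
        · exact Or.inr ⟨by linarith [hx.1], ht.2.le⟩
    refine ⟨convex_Ioo 0 1, ?_⟩
    intro x hx y hy a b ha hb hab
    have hm : a • x + b • y ∈ Set.Ioo (0:ℝ) 1 := (convex_Ioo 0 1) hx hy ha hb hab
    simp only
    rw [hzero x hx, hzero y hy, hzero _ hm]
    simp
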